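/- Assume ν ∈ 𝒫₂(ℝ^d) is not a Dirac mass. Then for every μ ∈ 𝒫₂(ℝ^d) there exists a sequence (μₙ) in 𝒫₂(ℝ^d) with W₂(μₙ, μ) → 0 and such that for each n there is no measurable Tₙ : ℝ^d → ℝ^d with the set of W₂-optimal couplings between μₙ and ν equal to {(Id,Tₙ)#μₙ}. -/

import Mathlib

open MeasureTheory ProbabilityTheory Set Filter
open scoped ENNReal BoundedContinuousFunction

noncomputable section

abbrev Ed (d : ℕ) := EuclideanSpace ℝ (Fin d)

/-- π is a coupling of μ and ν. -/
def IsCoupling {d : ℕ} (π : Measure (Ed d × Ed d)) (μ ν : Measure (Ed d)) : Prop :=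
  π.map Prod.fst = μ ∧ π.map Prod.snd = ν

/-- quadratic transport cost of a coupling. -/
def cost {d : ℕ} (π : Measure (Ed d × Ed d)) : ℝ := ∫ p, ‖p.2 - p.1‖ ^ 2 ∂π

/-- squared quadratic Wasserstein distance. -/
def W2sq {d : ℕ} (μ ν : Measure (Ed d)) : ℝ := sInf (cost '' {π | IsCoupling π μ ν})

/-- π is a W₂-optimal coupling between μ and ν. -/
def IsOptimalCoupling {d : ℕ} (π : Measure (Ed d × Ed d)) (μ ν : Measure (Ed d)) : Prop :=
  IsCoupling π μ ν ∧ cost π = W2sq μ ν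

/-- the coupling (Id, T)#μ given by a map T. -/
def givenByMap {d : ℕ} (μ : Measure (Ed d)) (T : Ed d → Ed d) : Measure (Ed d × Ed d) :=
  μ.map (fun x => (x, T x))

/-- finite second moment. -/
def FiniteSecondMoment {d : ℕ} (μ : Measure (Ed d)) : Prop :=
  Integrable (fun x => ‖x‖ ^ 2) μ

/-- convex order: ∫φ dη ≤ ∫φ dν for all convex φ whose integrals make sense. -/
def ConvexOrder {d : ℕ} (η ν : Measure (Ed d)) : Prop :=
  ∀ φ : Ed d → ℝ, ConvexOn ℝ Set.univ φ → Integrable φ η → Integrable φ ν →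
    ∫ x, φ x ∂η ≤ ∫ y, φ y ∂ν


set_option maxHeartbeats 1000000 in
lemma coord_atom (ν : Measure (Ed d)) [IsProbabilityMeasure ν]
    (h01 : ∀ B : Set (Ed d), MeasurableSet B → ν B = 0 ∨ ν B = 1) (i : Fin d) :
    ∃ c : ℝ, ν {z : Ed d | z i = c} = 1 := by
  have hcoord : Measurable fun z : Ed d => z i := (measurable_pi_apply i).comp (WithLp.measurable_ofLp _ _)
  have hmeas : ∀ t : ℝ, MeasurableSet {z : Ed d | z i ≤ t} := fun t =>
    measurableSet_le hcoord measurable_const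
  have hmono : ∀ ⦃s t : ℝ⦄, s ≤ t →
      ν {z : Ed d | z i ≤ s} ≤ ν {z : Ed d | z i ≤ t} := fun s t hst =>
    measure_mono (fun z hz => le_trans hz hst)
  have h01' : ∀ t, ν {z : Ed d | z i ≤ t} = 0 ∨ ν {z : Ed d | z i ≤ t} = 1 :=
    fun t => h01 _ (hmeas t)
  have h1 : ∃ t : ℝ, ν {z : Ed d | z i ≤ t} = 1 := by
    by_contra h
    push_neg at h
    have h0 : ∀ t, ν {z : Ed d | z i ≤ t} = 0 := fun t => (h01' t).resolve_right (h t)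
    have huniv : (univ : Set (Ed d)) = ⋃ n : ℕ, {z : Ed d | z i ≤ n} := by
      ext z
      simp only [mem_univ, mem_iUnion, true_iff, mem_setOf_eq]
      exact exists_nat_ge (z i)
    have hle : ν (⋃ n : ℕ, {z : Ed d | z i ≤ n}) ≤ ∑' n : ℕ, ν {z : Ed d | z i ≤ (n:ℝ)} :=
      measure_iUnion_le _
    rw [← huniv, measure_univ] at hle
    simp only [h0, tsum_zero] at hle
    exact (by norm_num : ¬ ((1:ℝ≥0∞) ≤ 0)) hle
  have h0 : ∃ t : ℝ, ν {z : Ed d | z i ≤ t} = 0 := by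
    by_contra h
    push_neg at h
    have hall : ∀ t, ν {z : Ed d | z i ≤ t} = 1 := fun t => (h01' t).resolve_left (h t)
    have hcompl : ∀ n : ℕ, ν ({z : Ed d | z i ≤ -(n:ℝ)}ᶜ) = 0 := by
      intro n
      rw [prob_compl_eq_one_sub (hmeas _), hall]
      simp
    have huniv : (univ : Set (Ed d)) = ⋃ n : ℕ, ({z : Ed d | z i ≤ -(n:ℝ)}ᶜ) := by
      ext z
      simp only [mem_univ, mem_iUnion, true_iff, mem_compl_iff, mem_setOf_eq, not_le]
      obtain ⟨n, hn⟩ := exists_nat_gt (-(z i))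
      exact ⟨n, by linarith⟩
    have hle : ν (⋃ n : ℕ, ({z : Ed d | z i ≤ -(n:ℝ)}ᶜ)) ≤
        ∑' n : ℕ, ν ({z : Ed d | z i ≤ -(n:ℝ)}ᶜ) := measure_iUnion_le _
    rw [← huniv, measure_univ] at hle
    rw [ENNReal.tsum_eq_zero.mpr hcompl] at hle
    exact (by norm_num : ¬ ((1:ℝ≥0∞) ≤ 0)) hle
  obtain ⟨t₁, ht₁⟩ := h1
  obtain ⟨t₀, ht₀⟩ := h0
  set S : Set ℝ := {t | ν {z : Ed d | z i ≤ t} = 1} with hS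
  have hSne : S.Nonempty := ⟨t₁, ht₁⟩
  have hSbdd : BddBelow S := by
    refine ⟨t₀, fun t ht => ?_⟩
    by_contra hlt
    push_neg at hlt
    have h2 := hmono hlt.le
    rw [ht, ht₀] at h2
    exact (by norm_num : ¬ ((1:ℝ≥0∞) ≤ 0)) h2
  set c := sInf S with hc
  have hlt0 : ν {z : Ed d | z i < c} = 0 := by
    have hsub : {z : Ed d | z i < c} ⊆ ⋃ n : ℕ, {z : Ed d | z i ≤ c - 1/(n+1)} := by
      intro z hz
      obtain ⟨n, hn⟩ := exists_nat_one_div_lt (show (0:ℝ) < c - z i by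
        simp only [mem_setOf_eq] at hz; linarith)
      exact mem_iUnion.mpr ⟨n, by simp only [mem_setOf_eq]; push_cast at hn ⊢; linarith⟩
    have hzero : ∀ n : ℕ, ν {z : Ed d | z i ≤ c - 1/((n:ℝ)+1)} = 0 := by
      intro n
      refine (h01' _).resolve_right (fun h1' => ?_)
      have h2 : c ≤ c - 1/((n:ℝ)+1) := csInf_le hSbdd h1'
      have hpos : (0:ℝ) < 1/((n:ℝ)+1) := by positivity
      linarith
    refine le_antisymm ?_ zero_le
    calc ν {z : Ed d | z i < c} ≤ ∑' n : ℕ, ν {z : Ed d | z i ≤ c - 1/((n:ℝ)+1)} :=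
          le_trans (measure_mono hsub) (measure_iUnion_le _)
      _ = 0 := ENNReal.tsum_eq_zero.mpr hzero
  have hle1 : ν {z : Ed d | z i ≤ c} = 1 := by
    have hone : ∀ n : ℕ, ν {z : Ed d | z i ≤ c + 1/((n:ℝ)+1)} = 1 := by
      intro n
      have hcc : c < c + 1/((n:ℝ)+1) := by
        have : (0:ℝ) < 1/((n:ℝ)+1) := by positivity
        linarith
      obtain ⟨t, htS, htlt⟩ := (csInf_lt_iff hSbdd hSne).mp hcc
      refine le_antisymm prob_le_one ?_
      calc (1:ℝ≥0∞) = ν {z : Ed d | z i ≤ t} := htS.symm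
        _ ≤ _ := hmono htlt.le
    have hcompl0 : ν ({z : Ed d | z i ≤ c}ᶜ) = 0 := by
      have hsub : ({z : Ed d | z i ≤ c}ᶜ) ⊆ ⋃ n : ℕ, ({z : Ed d | z i ≤ c + 1/((n:ℝ)+1)}ᶜ) := by
        intro z hz
        simp only [mem_compl_iff, mem_setOf_eq, not_le] at hz
        obtain ⟨n, hn⟩ := exists_nat_one_div_lt (show (0:ℝ) < z i - c by linarith)
        refine mem_iUnion.mpr ⟨n, ?_⟩
        simp only [mem_compl_iff, mem_setOf_eq, not_le]
        push_cast at hn ⊢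
        linarith
      have hzero : ∀ n : ℕ, ν ({z : Ed d | z i ≤ c + 1/((n:ℝ)+1)}ᶜ) = 0 := by
        intro n
        rw [prob_compl_eq_one_sub (hmeas _), hone n]
        simp
      refine le_antisymm ?_ zero_le
      calc ν ({z : Ed d | z i ≤ c}ᶜ) ≤ ∑' n : ℕ, ν ({z : Ed d | z i ≤ c + 1/((n:ℝ)+1)}ᶜ) :=
            le_trans (measure_mono hsub) (measure_iUnion_le _)
        _ = 0 := ENNReal.tsum_eq_zero.mpr hzero
    have hsum := prob_compl_eq_one_sub (μ := ν) (hmeas c)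
    rw [hcompl0] at hsum
    rcases h01' c with h | h
    · rw [h] at hsum; norm_num at hsum
    · exact h
  refine ⟨c, ?_⟩
  have hset : {z : Ed d | z i = c} = {z : Ed d | z i ≤ c} \ {z : Ed d | z i < c} := by
    ext z
    simp only [mem_setOf_eq, mem_diff, not_lt]
    constructor
    · intro h; exact ⟨le_of_eq h, ge_of_eq h⟩
    · rintro ⟨h₁, h₂⟩; exact le_antisymm h₁ h₂
  rw [hset, measure_diff_null hlt0, hle1]

lemma exists_good_set (ν : Measure (Ed d)) [IsProbabilityMeasure ν]
    (hnd : ¬ ∃ x : Ed d, ν = Measure.dirac x) :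
    ∃ B : Set (Ed d), MeasurableSet B ∧ 0 < ν B ∧ ν B < 1 := by
  by_contra h
  push_neg at h
  have h01 : ∀ B : Set (Ed d), MeasurableSet B → ν B = 0 ∨ ν B = 1 := by
    intro B hB
    rcases eq_or_lt_of_le ((zero_le : 0 ≤ ν B)) with h0 | h0
    · exact Or.inl h0.symm
    · exact Or.inr (le_antisymm prob_le_one (h B hB h0))
  have hcoord : ∀ i : Fin d, Measurable fun z : Ed d => z i := fun i => (measurable_pi_apply i).comp (WithLp.measurable_ofLp _ _)
  choose c hc using coord_atom ν h01
  set x : Ed d := WithLp.toLp 2 c with hx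
  have hxone : ν {x} = 1 := by
    have hseteq : ({x} : Set (Ed d)) = ⋂ i : Fin d, {z : Ed d | z i = c i} := by
      ext z
      simp only [mem_singleton_iff, mem_iInter, mem_setOf_eq]
      constructor
      · intro h'; intro i; rw [h']
      · intro h'; ext i; exact h' i
    rw [hseteq]
    have hcompl : ν ((⋂ i : Fin d, {z : Ed d | z i = c i})ᶜ) = 0 := by
      rw [compl_iInter]
      refine le_antisymm ?_ zero_le
      calc ν (⋃ i : Fin d, ({z : Ed d | z i = c i}ᶜ)) ≤
          ∑' i : Fin d, ν ({z : Ed d | z i = c i}ᶜ) := measure_iUnion_le _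
        _ = 0 := by
            refine ENNReal.tsum_eq_zero.mpr (fun i => ?_)
            rw [prob_compl_eq_one_sub (measurableSet_eq_fun (hcoord i)
              measurable_const), hc i]
            simp
    have hmeasI : MeasurableSet (⋂ i : Fin d, {z : Ed d | z i = c i}) :=
      MeasurableSet.iInter (fun i => measurableSet_eq_fun (hcoord i) measurable_const)
    have := prob_compl_eq_one_sub (μ := ν) hmeasI
    rw [hcompl] at this
    have h2 : ν (⋂ i : Fin d, {z : Ed d | z i = c i}) ≤ 1 := prob_le_one
    rcases eq_or_lt_of_le h2 with he | hlt
    · exact he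
    · exfalso
      rw [eq_comm, tsub_eq_zero_iff_le] at this
      exact absurd (le_antisymm h2 this) hlt.ne
  refine hnd ⟨x, ?_⟩
  ext A hA
  rw [Measure.dirac_apply' _ hA]
  by_cases hxA : x ∈ A
  · rw [indicator_of_mem hxA]
    refine le_antisymm prob_le_one ?_
    calc (1:ℝ≥0∞) = ν {x} := hxone.symm
      _ ≤ ν A := measure_mono (singleton_subset_iff.mpr hxA)
  · rw [indicator_of_notMem hxA]
    refine le_antisymm ?_ zero_le
    calc ν A ≤ ν ({x}ᶜ) := measure_mono (subset_compl_singleton_iff.mpr hxA)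
      _ = 1 - ν {x} := prob_compl_eq_one_sub (MeasurableSet.singleton x)
      _ = 0 := by rw [hxone]; simp

set_option maxHeartbeats 1000000 in
lemma approx_lemma (μ : Measure (Ed d)) [IsProbabilityMeasure μ]
    (hμ : Integrable (fun x => ‖x‖ ^ 2) μ) (βr : ℝ) (hβ0 : 0 < βr) (hβ1 : βr < 1)
    (δ : ℝ) (hδ : 0 < δ) :
    ∃ μ' : Measure (Ed d), IsProbabilityMeasure μ' ∧ Integrable (fun x => ‖x‖ ^ 2) μ' ∧
      (∃ π : Measure (Ed d × Ed d), π.map Prod.fst = μ' ∧ π.map Prod.snd = μ ∧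
        (∫ p, ‖p.2 - p.1‖ ^ 2 ∂π) ≤ δ) ∧
      (∀ C : Set (Ed d), MeasurableSet C → (μ' C).toReal ≠ βr) := by
  classical
  -- id has finite L² norm
  have hid2 : MemLp (fun x : Ed d => x) 2 μ :=
    (memLp_two_iff_integrable_sq_norm aestronglyMeasurable_id).mpr hμ
  set r : ℝ := Real.sqrt (δ / 2) with hr
  have hrpos : 0 < r := Real.sqrt_pos.mpr (by linarith)
  obtain ⟨g, hg, hgmem⟩ := hid2.exists_simpleFunc_eLpNorm_sub_lt (by norm_num)
    (ENNReal.ofReal_pos.mpr hrpos).ne'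
  have hgm : Measurable ⇑g := g.measurable
  have hdiff : MemLp (fun x : Ed d => x - g x) 2 μ := hid2.sub hgmem
  have hint : Integrable (fun x => ‖x - g x‖ ^ 2) μ :=
    (memLp_two_iff_integrable_sq_norm hdiff.aestronglyMeasurable).mp hdiff
  -- integral bound from eLpNorm bound
  have hIval : ∫ x, ‖x - g x‖ ^ 2 ∂μ < δ / 2 := by
    have heq := hdiff.eLpNorm_eq_integral_rpow_norm two_ne_zero ENNReal.ofNat_ne_top
    have hfg : (fun x : Ed d => x) - ⇑g = fun x : Ed d => x - g x := rfl
    rw [hfg] at hg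
    rw [heq] at hg
    set I : ℝ := ∫ x, ‖x - g x‖ ^ ((2:ℝ≥0∞).toReal) ∂μ with hI
    have hI0 : 0 ≤ I := integral_nonneg (fun x => Real.rpow_nonneg (norm_nonneg _) _)
    have hlt : I ^ ((2:ℝ≥0∞).toReal)⁻¹ < r :=
      (ENNReal.ofReal_lt_ofReal_iff hrpos).mp hg
    have h2 : (2:ℝ≥0∞).toReal = (2:ℝ) := by norm_num
    have hIpow : (I ^ ((2:ℝ≥0∞).toReal)⁻¹) ^ (2:ℕ) = I := by
      rw [h2, ← Real.rpow_natCast (I ^ (2:ℝ)⁻¹) 2, ← Real.rpow_mul hI0]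
      norm_num
    have hlt2 : I < r ^ (2:ℕ) := by
      calc I = (I ^ ((2:ℝ≥0∞).toReal)⁻¹) ^ (2:ℕ) := hIpow.symm
        _ < r ^ (2:ℕ) := by
            apply pow_lt_pow_left₀ hlt (Real.rpow_nonneg hI0 _)
            norm_num
    have hr2 : r ^ (2:ℕ) = δ / 2 := Real.sq_sqrt (by linarith)
    have hII : I = ∫ x, ‖x - g x‖ ^ 2 ∂μ := by
      rw [hI]
      congr 1
      funext x
      rw [h2, ← Real.rpow_natCast (‖x - g x‖) 2]
      norm_num
    rw [← hII]
    rw [hr2] at hlt2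
    exact hlt2
  -- the finite set of achievable values
  set M : ℝ := ∫ x, ‖x‖ ^ 2 ∂μ with hM
  have hM0 : 0 ≤ M := integral_nonneg (fun x => by positivity)
  set S₀ : Set ℝ≥0∞ := (fun J : Finset (Ed d) => μ (⇑g ⁻¹' ↑J)) '' {J | J ⊆ g.range} with hS₀
  have hS₀fin : S₀.Finite := by
    apply Set.Finite.image
    exact Set.Finite.subset (g.range.powerset.finite_toSet)
      (fun J hJ => Finset.mem_coe.mpr (Finset.mem_powerset.mpr hJ))
  set Bad : Set ℝ := {x | ∃ s' ∈ ENNReal.toReal '' S₀, ∃ e' ∈ ({0, 1} : Set ℝ),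
    (1 - x) * s' + x * e' = βr} with hBad
  have hBadfin : Bad.Finite := by
    have hsub : Bad ⊆ ⋃ s' ∈ ENNReal.toReal '' S₀, ⋃ e' ∈ ({0, 1} : Set ℝ),
        {x : ℝ | (1 - x) * s' + x * e' = βr} := by
      rintro x ⟨s', hs', e', he', hx⟩
      exact mem_biUnion hs' (mem_biUnion he' hx)
    refine Set.Finite.subset ?_ hsub
    refine Set.Finite.biUnion (hS₀fin.image _) (fun s' _ => ?_)
    refine Set.Finite.biUnion (by simp : ({0,1} : Set ℝ).Finite) (fun e' he' => ?_)
    by_cases hse : s' = e'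
    · convert Set.finite_empty
      ext x
      simp only [mem_setOf_eq, mem_empty_iff_false, iff_false]
      intro hx
      have hs2 : s' = βr := by subst hse; nlinarith [hx]
      simp only [mem_insert_iff, mem_singleton_iff] at he'
      rcases he' with rfl | rfl
      · rw [hse] at hs2; exact hβ0.ne hs2
      · rw [hse] at hs2; exact hβ1.ne hs2.symm
    · refine Set.Finite.subset (Set.finite_singleton ((βr - s') / (e' - s'))) ?_
      intro x hx
      simp only [mem_setOf_eq] at hx
      have hne : e' - s' ≠ 0 := sub_ne_zero.mpr (Ne.symm hse)
      simp only [mem_singleton_iff]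
      field_simp
      nlinarith [hx]
  -- choose ε
  set b : ℝ := min 1 (δ / (2 * (M + 1))) with hb
  have hbpos : 0 < b := lt_min one_pos (by positivity)
  have hne : (Set.Ioo (0:ℝ) b \ Bad).Nonempty := ((Set.Ioo_infinite hbpos).diff hBadfin).nonempty
  obtain ⟨εr, hεmem⟩ := hne
  have hε0 : 0 < εr := hεmem.1.1
  have hεb : εr < b := hεmem.1.2
  have hεnb : εr ∉ Bad := hεmem.2
  have hε1 : εr ≤ 1 := le_of_lt (lt_of_lt_of_le hεb (min_le_left _ _))
  set e : ℝ≥0∞ := ENNReal.ofReal εr with he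
  have he1 : e ≤ 1 := ENNReal.ofReal_le_one.mpr hε1
  have heT : e ≠ ⊤ := ENNReal.ofReal_ne_top
  have heR : e.toReal = εr := ENNReal.toReal_ofReal hε0.le
  have h1eT : (1 - e) ≠ ⊤ := (lt_of_le_of_lt tsub_le_self ENNReal.one_lt_top).ne
  have h1eR : (1 - e).toReal = 1 - εr := by
    rw [ENNReal.toReal_sub_of_le he1 ENNReal.one_ne_top, ENNReal.toReal_one, heR]
  set μ' : Measure (Ed d) := (1 - e) • μ.map ⇑g + e • Measure.dirac (0 : Ed d) with hμ'
  have hmapg_univ : (μ.map ⇑g) univ = 1 := by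
    rw [Measure.map_apply hgm MeasurableSet.univ, preimage_univ, measure_univ]
  have hprob : IsProbabilityMeasure μ' := by
    constructor
    rw [hμ']
    simp only [Measure.add_apply, Measure.smul_apply, smul_eq_mul]
    rw [hmapg_univ, measure_univ, mul_one, mul_one]
    exact tsub_add_cancel_of_le he1
  refine ⟨μ', hprob, ?_, ?_, ?_⟩
  · -- finite second moment
    apply Integrable.add_measure
    · refine Integrable.smul_measure ?_ h1eT
      refine (integrable_map_measure ?_ hgm.aemeasurable).mpr ?_
      · exact (continuous_norm.pow 2).aestronglyMeasurable
      · exact (memLp_two_iff_integrable_sq_norm hgmem.aestronglyMeasurable).mp hgmem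
    · refine Integrable.smul_measure ?_ heT
      have hae : ((fun x : Ed d => ‖x‖ ^ 2) : Ed d → ℝ) =ᵐ[Measure.dirac (0 : Ed d)]
          (fun _ => ‖(0 : Ed d)‖ ^ 2) := ae_eq_dirac' (measurable_norm.pow measurable_const)
      exact (integrable_const _).congr hae.symm
  · -- coupling
    set π : Measure (Ed d × Ed d) :=
      (1 - e) • μ.map (fun x => (g x, x)) + e • ((Measure.dirac (0 : Ed d)).prod μ) with hπ
    have hpair : Measurable fun x : Ed d => (g x, x) := hgm.prodMk measurable_id
    refine ⟨π, ?_, ?_, ?_⟩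
    · rw [hπ, Measure.map_add _ _ measurable_fst, Measure.map_smul, Measure.map_smul,
        Measure.map_map measurable_fst hpair, Measure.map_fst_prod, measure_univ, one_smul]
      rfl
    · rw [hπ, Measure.map_add _ _ measurable_snd, Measure.map_smul, Measure.map_smul,
        Measure.map_map measurable_snd hpair, Measure.map_snd_prod, measure_univ, one_smul]
      have h1 : (Prod.snd ∘ fun x : Ed d => (g x, x)) = id := rfl
      rw [h1, Measure.map_id, ← add_smul, tsub_add_cancel_of_le he1, one_smul]
    · have hdp : (Measure.dirac (0 : Ed d)).prod μ = μ.map (Prod.mk (0 : Ed d)) :=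
        Measure.dirac_prod _
      have hfc : Continuous fun p : Ed d × Ed d => ‖p.2 - p.1‖ ^ 2 := by fun_prop
      have hI1 : Integrable (fun p : Ed d × Ed d => ‖p.2 - p.1‖ ^ 2)
          (μ.map (fun x => (g x, x))) := by
        refine (integrable_map_measure hfc.aestronglyMeasurable hpair.aemeasurable).mpr ?_
        exact hint
      have hI2 : Integrable (fun p : Ed d × Ed d => ‖p.2 - p.1‖ ^ 2)
          (μ.map (Prod.mk (0 : Ed d))) := by
        refine (integrable_map_measure hfc.aestronglyMeasurable
          measurable_prodMk_left.aemeasurable).mpr ?_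
        have hcomp : ((fun p : Ed d × Ed d => ‖p.2 - p.1‖ ^ 2) ∘ Prod.mk (0 : Ed d)) =
            fun y : Ed d => ‖y - 0‖ ^ 2 := rfl
        rw [hcomp]
        simp only [sub_zero]
        exact hμ
      rw [hπ, hdp, integral_add_measure (hI1.smul_measure h1eT) (hI2.smul_measure heT),
        integral_smul_measure, integral_smul_measure,
        integral_map hpair.aemeasurable hfc.aestronglyMeasurable,
        integral_map measurable_prodMk_left.aemeasurable hfc.aestronglyMeasurable]
      simp only [sub_zero]
      have hb1 : (1 - e).toReal • ∫ x, ‖x - g x‖ ^ 2 ∂μ ≤ δ / 2 := by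
        rw [smul_eq_mul]
        have h1e1 : (1 - e).toReal ≤ 1 := by rw [h1eR]; linarith
        have h1e0 : 0 ≤ (1 - e).toReal := ENNReal.toReal_nonneg
        have hInn : 0 ≤ ∫ x, ‖x - g x‖ ^ 2 ∂μ := integral_nonneg (fun x => by positivity)
        nlinarith [hIval]
      have hb2 : e.toReal • ∫ x, ‖x‖ ^ 2 ∂μ ≤ δ / 2 := by
        rw [smul_eq_mul, heR, ← hM]
        have h1 : εr ≤ δ / (2 * (M + 1)) := le_of_lt (lt_of_lt_of_le hεb (min_le_right _ _))
        have h2 : εr * M ≤ (δ / (2 * (M + 1))) * M :=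
          mul_le_mul_of_nonneg_right h1 hM0
        have h3 : (δ / (2 * (M + 1))) * M ≤ δ / 2 := by
          rw [div_mul_eq_mul_div, div_le_div_iff₀ (by positivity) (by norm_num)]
          nlinarith
        linarith
      linarith [hb1, hb2]
  · -- the value avoidance
    intro C hC heqv
    have hval : μ' C = (1 - e) * μ (⇑g ⁻¹' C) + e * (Measure.dirac (0 : Ed d)) C := by
      rw [hμ']
      simp only [Measure.add_apply, Measure.smul_apply, smul_eq_mul]
      rw [Measure.map_apply hgm hC]
    set s : ℝ≥0∞ := μ (⇑g ⁻¹' C) with hs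
    have hsT : s ≠ ⊤ := (measure_lt_top μ _).ne
    have hsS : s ∈ S₀ := by
      have hpre : ⇑g ⁻¹' C = ⇑g ⁻¹' ↑(g.range.filter (fun c => c ∈ C)) := by
        ext x
        simp [SimpleFunc.mem_range_self]
      exact ⟨g.range.filter (fun c => c ∈ C), Finset.filter_subset _ _, by rw [hs, hpre]⟩
    set dC : ℝ≥0∞ := (Measure.dirac (0 : Ed d)) C with hdC
    have hdCval : dC = 0 ∨ dC = 1 := by
      rw [hdC, Measure.dirac_apply' _ hC]
      by_cases h0C : (0 : Ed d) ∈ C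
      · right; rw [indicator_of_mem h0C]; rfl
      · left; rw [indicator_of_notMem h0C]
    have hdT : dC ≠ ⊤ := by rcases hdCval with h | h <;> simp [h]
    have htr : (μ' C).toReal = (1 - εr) * s.toReal + εr * dC.toReal := by
      rw [hval, ENNReal.toReal_add (ENNReal.mul_ne_top h1eT hsT) (ENNReal.mul_ne_top heT hdT),
        ENNReal.toReal_mul, ENNReal.toReal_mul, h1eR, heR]
    refine hεnb ⟨s.toReal, mem_image_of_mem _ hsS, dC.toReal, ?_, ?_⟩
    · rcases hdCval with h | h <;> simp [h]
    · rw [← htr, heqv]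

set_option maxHeartbeats 1000000 in
/-- If ν is not a Dirac mass, every μ can be W₂-approximated by measures μₙ for which no
optimal transport map to ν exists. -/
theorem stmt13 {d : ℕ} (ν : Measure (Ed d)) [IsProbabilityMeasure ν]
    (hν : FiniteSecondMoment ν) (hnotdirac : ¬ ∃ x : Ed d, ν = Measure.dirac x)
    (μ : Measure (Ed d)) [IsProbabilityMeasure μ] (hμ : FiniteSecondMoment μ) :
    ∃ μs : ℕ → Measure (Ed d),
      (∀ n, IsProbabilityMeasure (μs n) ∧ FiniteSecondMoment (μs n)) ∧
      Tendsto (fun n => W2sq (μs n) μ) atTop (nhds 0) ∧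
      ∀ n, ¬ ∃ T : Ed d → Ed d, Measurable T ∧
        {π | IsOptimalCoupling π (μs n) ν} = {givenByMap (μs n) T} := by
  obtain ⟨B, hB, hB0, hB1⟩ := exists_good_set ν hnotdirac
  have hBfin : ν B ≠ ⊤ := (lt_of_lt_of_le hB1 le_top).ne
  set βr : ℝ := (ν B).toReal with hβr
  have hβ0 : 0 < βr := ENNReal.toReal_pos hB0.ne' hBfin
  have hβ1 : βr < 1 := by
    have := (ENNReal.toReal_lt_toReal hBfin ENNReal.one_ne_top).mpr hB1
    simpa using this
  have H : ∀ n : ℕ, ∃ μ' : Measure (Ed d),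
      IsProbabilityMeasure μ' ∧ Integrable (fun x => ‖x‖ ^ 2) μ' ∧
      (∃ π : Measure (Ed d × Ed d), π.map Prod.fst = μ' ∧ π.map Prod.snd = μ ∧
        (∫ p, ‖p.2 - p.1‖ ^ 2 ∂π) ≤ 1 / (n + 1)) ∧
      (∀ C : Set (Ed d), MeasurableSet C → (μ' C).toReal ≠ βr) := fun n =>
    approx_lemma μ hμ βr hβ0 hβ1 (1 / (n + 1)) (by positivity)
  choose μs h1 h2 h3 h4 using H
  have hW2nonneg : ∀ n, 0 ≤ W2sq (μs n) μ := by
    intro n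
    apply Real.sInf_nonneg
    rintro y ⟨π, -, rfl⟩
    exact integral_nonneg (fun p => by positivity)
  have hW2le : ∀ n, W2sq (μs n) μ ≤ 1 / (n + 1) := by
    intro n
    obtain ⟨π, hfst, hsnd, hcost⟩ := h3 n
    refine le_trans (csInf_le ?_ ?_) hcost
    · exact ⟨0, fun y ⟨π', hπ', hy⟩ => hy ▸ integral_nonneg (fun p => by positivity)⟩
    · exact ⟨π, ⟨hfst, hsnd⟩, rfl⟩
  refine ⟨μs, fun n => ⟨h1 n, h2 n⟩, ?_, ?_⟩
  · exact tendsto_of_tendsto_of_tendsto_of_le_of_le tendsto_const_nhds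
      tendsto_one_div_add_atTop_nhds_zero_nat hW2nonneg hW2le
  · rintro n ⟨T, hT, hset⟩
    have hmem : givenByMap (μs n) T ∈ {π | IsOptimalCoupling π (μs n) ν} := by
      rw [hset]; rfl
    have hsnd : (givenByMap (μs n) T).map Prod.snd = ν := hmem.1.2
    unfold givenByMap at hsnd
    rw [Measure.map_map measurable_snd
      (show Measurable fun x : Ed d => (x, T x) from measurable_id.prodMk hT)] at hsnd
    have hcomp : (Prod.snd ∘ fun x : Ed d => (x, T x)) = T := rfl
    rw [hcomp] at hsnd
    have hval : (μs n) (T ⁻¹' B) = ν B := by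
      rw [← hsnd, Measure.map_apply hT hB]
    exact h4 n (T ⁻¹' B) (hT hB) (by rw [hval])
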